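/- Let F ∈ {ℝ, ℂ}, let A ∈ F^{n×n} be a matrix such that at least an ε-fraction of its r×r submatrices are nonsingular. Then for any k ≤ r, at least an (ε / binom(r,k))-fraction of the k×k submatrices of A are nonsingular. -/

import Mathlib

open Finset Module Submodule Matrix

/-- From a finite family of vectors whose span has finrank `d`, one can select a
`d`-element set of indices on which the family is linearly independent. -/
lemma exists_finset_li {K V ι : Type*} [Field K] [AddCommGroup V] [Module K V] [Fintype ι]
    (v : ι → V) {d : ℕ} (hd : finrank K (Submodule.span K (Set.range v)) = d) :
    ∃ J : Finset ι, J.card = d ∧ LinearIndependent K (fun j : J => v (j : ι)) := by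
  classical
  rcases isEmpty_or_nonempty ι with hι | hι
  · refine ⟨∅, ?_, ?_⟩
    · have : Set.range v = ∅ := Set.range_eq_empty v
      rw [this, Submodule.span_empty, finrank_bot] at hd
      simpa using hd
    · exact linearIndependent_empty_type
  obtain ⟨t, hts, hspan, hli⟩ := exists_linearIndependent K (Set.range v)
  have htfin : t.Finite := (Set.finite_range v).subset hts
  haveI : Fintype t := htfin.fintype
  have hcard : t.toFinset.card = d := by
    have := finrank_span_set_eq_card (R := K) (M := V) (s := t) hli
    rw [hspan, hd] at this
    exact this.symm
  set c : V → ι := Function.invFun v with hc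
  have hvc : ∀ x ∈ t, v (c x) = x := by
    intro x hx
    exact Function.invFun_eq (hts hx)
  refine ⟨t.toFinset.image c, ?_, ?_⟩
  · rw [Finset.card_image_of_injOn, hcard]
    intro a ha b hb hab
    have ha' : a ∈ t := by simpa using ha
    have hb' : b ∈ t := by simpa using hb
    rw [← hvc a ha', ← hvc b hb', hab]
  · -- each j in the image satisfies v j ∈ t and c (v j) = j
    have hmem : ∀ j ∈ t.toFinset.image c, v j ∈ t ∧ c (v j) = j := by
      intro j hj
      rcases Finset.mem_image.1 hj with ⟨x, hx, rfl⟩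
      have hx' : x ∈ t := by simpa using hx
      rw [hvc x hx']
      exact ⟨hx', rfl⟩
    set J := t.toFinset.image c
    have g : ∀ j : J, v (j : ι) ∈ t := fun j => (hmem j j.2).1
    have : LinearIndependent K ((fun x : t => (x : V)) ∘ (fun j : J => (⟨v j, g j⟩ : t))) := by
      apply hli.comp
      intro j₁ j₂ hj
      have : v (j₁ : ι) = v (j₂ : ι) := by simpa [Subtype.ext_iff] using hj
      have h1 := (hmem j₁ j₁.2).2
      have h2 := (hmem j₂ j₂.2).2
      apply Subtype.ext
      rw [← h1, ← h2, this]
    exact this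

/-- If an `r×r` submatrix of `A` (rows `S`, columns `T`) has full rank `r`, then for every
`k`-subset `S' ⊆ S` there is a `k`-subset `T' ⊆ T` so that the corresponding `k×k` submatrix
has full rank `k`. -/
lemma key_sub {F : Type*} [RCLike F] {n r k : ℕ} (A : Matrix (Fin n) (Fin n) F)
    {S T : Finset (Fin n)} (hS : S.card = r) (hT : T.card = r)
    (hrank : (A.submatrix (fun i : {x // x ∈ S} => i.1) (fun j : {x // x ∈ T} => j.1)).rank = r)
    {S' : Finset (Fin n)} (hS'S : S' ⊆ S) (hS'k : S'.card = k) :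
    ∃ T' : Finset (Fin n), T' ⊆ T ∧ T'.card = k ∧
      (A.submatrix (fun i : {x // x ∈ S'} => i.1) (fun j : {x // x ∈ T'} => j.1)).rank = k := by
  classical
  set B : Matrix {x // x ∈ S} {x // x ∈ T} F :=
    A.submatrix (fun i : {x // x ∈ S} => i.1) (fun j : {x // x ∈ T} => j.1) with hB
  have hBrows : LinearIndependent F B := by
    rw [show LinearIndependent F B ↔ LinearIndependent F B.row from Iff.rfl,
      linearIndependent_iff_card_eq_finrank_span, Set.finrank,
      ← Matrix.rank_eq_finrank_span_row, hrank]
    simp [hS]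
  set e : {x // x ∈ S'} → {x // x ∈ S} := fun i => ⟨i.1, hS'S i.2⟩ with he
  have heinj : Function.Injective e := by
    intro a b hab
    have : (e a).1 = (e b).1 := congrArg Subtype.val hab
    exact Subtype.ext this
  set C : Matrix {x // x ∈ S'} {x // x ∈ T} F :=
    A.submatrix (fun i : {x // x ∈ S'} => i.1) (fun j : {x // x ∈ T} => j.1) with hC
  have hCrows : LinearIndependent F C := hBrows.comp e heinj
  have hCrank : C.rank = k := by
    rw [LinearIndependent.rank_matrix (M := C) hCrows]
    simp [hS'k]
  set v : {x // x ∈ T} → ({x // x ∈ S'} → F) := fun j i => A i.1 j.1 with hv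
  have hvspan : finrank F (Submodule.span F (Set.range v)) = k := by
    have h1 : C.rank = finrank F (Submodule.span F (Set.range C.transpose)) :=
      Matrix.rank_eq_finrank_span_cols C
    rw [hCrank] at h1
    exact h1.symm
  obtain ⟨J, hJcard, hJli⟩ := exists_finset_li v hvspan
  refine ⟨J.map ⟨Subtype.val, Subtype.val_injective⟩, ?_, ?_, ?_⟩
  · intro y hy
    rcases Finset.mem_map.1 hy with ⟨j, _, rfl⟩
    exact j.2
  · simp [hJcard]
  · set T' : Finset (Fin n) := J.map ⟨Subtype.val, Subtype.val_injective⟩ with hT'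
    set M : Matrix {x // x ∈ S'} {x // x ∈ T'} F :=
      A.submatrix (fun i : {x // x ∈ S'} => i.1) (fun j : {x // x ∈ T'} => j.1) with hM
    have hmemT : ∀ y : {x // x ∈ T'}, y.1 ∈ T := by
      intro y
      rcases Finset.mem_map.1 y.2 with ⟨j, _, hj⟩
      rw [← hj]; exact j.2
    have hmemJ : ∀ y : {x // x ∈ T'}, (⟨y.1, hmemT y⟩ : {x // x ∈ T}) ∈ J := by
      intro y
      rcases Finset.mem_map.1 y.2 with ⟨j, hjJ, hj⟩
      have : (⟨y.1, hmemT y⟩ : {x // x ∈ T}) = j := Subtype.ext hj.symm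
      rw [this]; exact hjJ
    set g : {x // x ∈ T'} → J := fun y => ⟨⟨y.1, hmemT y⟩, hmemJ y⟩ with hg
    have hginj : Function.Injective g := by
      intro a b hab
      apply Subtype.ext
      exact congrArg (fun x : J => (x.1 : {x // x ∈ T}).1) hab
    have hMt : LinearIndependent F Mᵀ := hJli.comp g hginj
    have : Mᵀ.rank = k := by
      rw [LinearIndependent.rank_matrix (M := Mᵀ) hMt, Fintype.card_coe, hT', Finset.card_map, hJcard]
    rw [← Matrix.rank_transpose]
    exact this

open scoped Classical in
/-- The number of `r`-subsets of `Fin n` containing a fixed `k`-set is at most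
`(n-k).choose (r-k)`. -/
lemma count_supersets {n r k : ℕ} {S' : Finset (Fin n)} (hS' : S'.card = k) :
    (((Finset.univ : Finset (Fin n)).powersetCard r).filter (fun S => S' ⊆ S)).card ≤
      (n - k).choose (r - k) := by
  classical
  set s := ((Finset.univ : Finset (Fin n)).powersetCard r).filter (fun S => S' ⊆ S) with hs
  have hinj : Set.InjOn (fun S => S \ S') s := by
    intro a ha b hb hab
    have ha' : S' ⊆ a := (Finset.mem_filter.1 ha).2
    have hb' : S' ⊆ b := (Finset.mem_filter.1 hb).2
    have : a \ S' ∪ S' = b \ S' ∪ S' := by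
      simpa using congrArg (· ∪ S') hab
    rwa [Finset.sdiff_union_of_subset ha', Finset.sdiff_union_of_subset hb'] at this
  calc s.card = (s.image (fun S => S \ S')).card := (Finset.card_image_of_injOn hinj).symm
    _ ≤ (((Finset.univ : Finset (Fin n)) \ S').powersetCard (r - k)).card := by
        apply Finset.card_le_card
        intro x hx
        rcases Finset.mem_image.1 hx with ⟨S, hSs, rfl⟩
        have hS1 : S.card = r := by
          simpa using (Finset.mem_powersetCard_univ.1 (Finset.mem_filter.1 hSs).1)
        have hS2 : S' ⊆ S := (Finset.mem_filter.1 hSs).2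
        rw [Finset.mem_powersetCard]
        refine ⟨Finset.sdiff_subset_sdiff (Finset.subset_univ S) le_rfl, ?_⟩
        rw [Finset.card_sdiff_of_subset hS2, hS1, hS']
    _ ≤ (n - k).choose (r - k) := by
        rw [Finset.card_powersetCard, Finset.card_sdiff_of_subset (Finset.subset_univ S'),
          Finset.card_univ, Fintype.card_fin, hS']



open scoped Classical in
/-- Let `F ∈ {ℝ, ℂ}` (formalised via `RCLike`), and let `A ∈ F^{n×n}` be a
matrix such that at least an `ε`-fraction of its `r×r` submatrices (given by a choice of `r`
rows and `r` columns, out of `binom(n,r)²` total choices) are nonsingular (i.e. have full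
rank `r`). Then for any `k ≤ r`, at least an `(ε / binom(r,k))`-fraction of the `k×k`
submatrices of `A` are nonsingular. -/
theorem stmt2 (F : Type*) [RCLike F] (n r k : ℕ) (hr : 1 ≤ r) (hrn : r ≤ n) (hk : k ≤ r)
    (ε : ℝ) (A : Matrix (Fin n) (Fin n) F)
    (h : ε * (n.choose r) ^ 2 ≤
      ((((Finset.univ : Finset (Fin n)).powersetCard r ×ˢ
          (Finset.univ : Finset (Fin n)).powersetCard r).filter
        (fun st => (A.submatrix (fun i : {x // x ∈ st.1} => i.1)
            (fun j : {x // x ∈ st.2} => j.1)).rank = r)).card : ℝ)) :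
    (ε / (r.choose k)) * (n.choose k) ^ 2 ≤
      ((((Finset.univ : Finset (Fin n)).powersetCard k ×ˢ
          (Finset.univ : Finset (Fin n)).powersetCard k).filter
        (fun st => (A.submatrix (fun i : {x // x ∈ st.1} => i.1)
            (fun j : {x // x ∈ st.2} => j.1)).rank = k)).card : ℝ) := by
  classical
  set Gr := (((Finset.univ : Finset (Fin n)).powersetCard r ×ˢ
          (Finset.univ : Finset (Fin n)).powersetCard r).filter
        (fun st => (A.submatrix (fun i : {x // x ∈ st.1} => i.1)
            (fun j : {x // x ∈ st.2} => j.1)).rank = r)) with hGr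
  set Gk := (((Finset.univ : Finset (Fin n)).powersetCard k ×ˢ
          (Finset.univ : Finset (Fin n)).powersetCard k).filter
        (fun st => (A.submatrix (fun i : {x // x ∈ st.1} => i.1)
            (fun j : {x // x ∈ st.2} => j.1)).rank = k)) with hGk
  set rel : Finset (Fin n) × Finset (Fin n) → Finset (Fin n) × Finset (Fin n) → Prop :=
    fun a b => b.1 ⊆ a.1 ∧ b.2 ⊆ a.2 with hrel
  -- double counting
  have hcount : Gr.card * r.choose k ≤ Gk.card * ((n - k).choose (r - k)) ^ 2 := by
    have h1 : ∀ a ∈ Gr, r.choose k ≤ (Gk.bipartiteAbove rel a).card := by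
      intro a ha
      have hmem := Finset.mem_filter.1 ha
      have hprod := Finset.mem_product.1 hmem.1
      have ha1 : a.1.card = r := Finset.mem_powersetCard_univ.1 hprod.1
      have ha2 : a.2.card = r := Finset.mem_powersetCard_univ.1 hprod.2
      have hrank : (A.submatrix (fun i : {x // x ∈ a.1} => i.1)
          (fun j : {x // x ∈ a.2} => j.1)).rank = r := hmem.2
      -- inject k-subsets of a.1 into the bipartiteAbove set
      have hc : (a.1.powersetCard k).card = r.choose k := by
        rw [Finset.card_powersetCard, ha1]
      rw [← hc]
      apply Finset.card_le_card_of_injOn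
        (fun S' => (S', if hS' : S' ⊆ a.1 ∧ S'.card = k then
          (key_sub A ha1 ha2 hrank hS'.1 hS'.2).choose else ∅))
      · intro S' hS'mem
        have hS'' : S' ⊆ a.1 ∧ S'.card = k := by
          have := Finset.mem_powersetCard.1 hS'mem
          exact ⟨this.1, this.2⟩
        simp only [dif_pos hS'', Finset.mem_coe]
        obtain ⟨hT'T, hT'k, hT'rank⟩ :=
          (key_sub A ha1 ha2 hrank hS''.1 hS''.2).choose_spec
        rw [Finset.mem_bipartiteAbove]
        constructor
        · rw [hGk, Finset.mem_filter, Finset.mem_product]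
          exact ⟨⟨Finset.mem_powersetCard_univ.2 hS''.2,
            Finset.mem_powersetCard_univ.2 hT'k⟩, hT'rank⟩
        · exact ⟨hS''.1, hT'T.trans (by intro x hx; exact hx)⟩
      · intro x hx y hy hxy
        exact congrArg Prod.fst hxy
    have h2 : ∀ b ∈ Gk, (Gr.bipartiteBelow rel b).card ≤ ((n - k).choose (r - k)) ^ 2 := by
      intro b hb
      have hmem := Finset.mem_filter.1 hb
      have hprod := Finset.mem_product.1 hmem.1
      have hb1 : b.1.card = k := Finset.mem_powersetCard_univ.1 hprod.1
      have hb2 : b.2.card = k := Finset.mem_powersetCard_univ.1 hprod.2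
      have hsub : Gr.bipartiteBelow rel b ⊆
          (((Finset.univ : Finset (Fin n)).powersetCard r).filter (fun S => b.1 ⊆ S)) ×ˢ
          (((Finset.univ : Finset (Fin n)).powersetCard r).filter (fun S => b.2 ⊆ S)) := by
        intro a ha
        rw [Finset.mem_bipartiteBelow] at ha
        obtain ⟨haGr, hrel1, hrel2⟩ := ha
        have hmem' := Finset.mem_filter.1 haGr
        have hprod' := Finset.mem_product.1 hmem'.1
        rw [Finset.mem_product]
        exact ⟨Finset.mem_filter.2 ⟨hprod'.1, hrel1⟩, Finset.mem_filter.2 ⟨hprod'.2, hrel2⟩⟩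
      calc (Gr.bipartiteBelow rel b).card ≤ _ := Finset.card_le_card hsub
        _ = _ := Finset.card_product _ _
        _ ≤ ((n - k).choose (r - k)) ^ 2 := by
            rw [sq]
            exact Nat.mul_le_mul (count_supersets hb1) (count_supersets hb2)
    exact Finset.card_mul_le_card_mul rel h1 h2
  -- arithmetic
  have hid : (n.choose r) * (r.choose k) = (n.choose k) * ((n - k).choose (r - k)) :=
    Nat.choose_mul hk
  have hcountR : (Gr.card : ℝ) * (r.choose k) ≤ (Gk.card : ℝ) * ((n - k).choose (r - k)) ^ 2 := by
    exact_mod_cast hcount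
  have hidR : ((n.choose r : ℝ)) * (r.choose k) = (n.choose k) * ((n - k).choose (r - k)) := by
    exact_mod_cast hid
  have ha : (0 : ℝ) < (r.choose k : ℝ) := by exact_mod_cast Nat.choose_pos hk
  have hbpos : (0 : ℝ) < (((n - k).choose (r - k) : ℕ) : ℝ) := by
    exact_mod_cast Nat.choose_pos (Nat.sub_le_sub_right hrn k)
  rw [div_mul_eq_mul_div, div_le_iff₀ ha]
  have key2 : ε * (n.choose k : ℝ) ^ 2 * ((n - k).choose (r - k) : ℝ) ^ 2 ≤
      (Gk.card : ℝ) * (r.choose k) * ((n - k).choose (r - k) : ℝ) ^ 2 := by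
    have e1 : ((n.choose k : ℝ))^2 * ((n - k).choose (r - k) : ℝ)^2 =
        ((n.choose r : ℝ))^2 * ((r.choose k : ℝ))^2 := by
      rw [← mul_pow, ← mul_pow, ← hidR]
    calc ε * (n.choose k : ℝ) ^ 2 * ((n - k).choose (r - k) : ℝ) ^ 2
        = (ε * (n.choose r : ℝ)^2) * ((r.choose k : ℝ))^2 := by
          rw [mul_assoc, e1]; ring
      _ ≤ (Gr.card : ℝ) * ((r.choose k : ℝ))^2 :=
          mul_le_mul_of_nonneg_right h (by positivity)
      _ = ((Gr.card : ℝ) * (r.choose k)) * (r.choose k) := by ring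
      _ ≤ ((Gk.card : ℝ) * ((n - k).choose (r - k)) ^ 2) * (r.choose k) :=
          mul_le_mul_of_nonneg_right hcountR ha.le
      _ = (Gk.card : ℝ) * (r.choose k) * ((n - k).choose (r - k) : ℝ) ^ 2 := by ring
  exact le_of_mul_le_mul_right key2 (by positivity)
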